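/- Fix t > 0 and let p₀ = Σ_{k=1}^K π_k N(μ_k, Σ_k) be a mixture of Gaussian densities on ℝ^m with π_k > 0 summing to 1. Then the denoising autoencoder Φ_t(x) = x + t ∇ log(W_{t/2} * p₀)(x) equals the responsibility-weighted combination Φ_t(x) = Σ_{k=1}^K γ_{kt}(x) [(I + tΣ_k^{-1})^{-1} x + (I + t^{-1}Σ_k)^{-1} μ_k], where γ_{kt}(x) = π_k N(x; μ_k, Σ_k + tI) / Σ_j π_j N(x; μ_j, Σ_j + tI). -/

import Mathlib

open Real MeasureTheory
open Matrix
open scoped RealInnerProductSpace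

noncomputable section

/-- The Gaussian heat kernel on `ℝ^m`. -/
def heatKernel (m : ℕ) (s : ℝ) (x : EuclideanSpace ℝ (Fin m)) : ℝ :=
  (4 * π * s) ^ (-(m : ℝ) / 2) * Real.exp (-‖x‖ ^ 2 / (4 * s))

/-- Density of the multivariate Gaussian `N(μ, S)` on `ℝ^m`. -/
def gaussDensity (m : ℕ) (μ : EuclideanSpace ℝ (Fin m))
    (S : Matrix (Fin m) (Fin m) ℝ) (x : EuclideanSpace ℝ (Fin m)) : ℝ :=
  (2 * π) ^ (-(m : ℝ) / 2) * S.det ^ (-(1 : ℝ) / 2) *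
    Real.exp (-(1 / 2) * ⟪x - μ, Matrix.toEuclideanLin S⁻¹ (x - μ)⟫)

variable {m : ℕ}

local notation "E" => EuclideanSpace ℝ (Fin m)
local notation "ev" => WithLp.equiv 2 (Fin m → ℝ)
local notation "toEL" => Matrix.toEuclideanLin

lemma inner_toEL (M : Matrix (Fin m) (Fin m) ℝ) (u v : E) :
    ⟪u, toEL M v⟫ = (ev u) ⬝ᵥ M *ᵥ (ev v) := by
  simp [PiLp.inner_apply, Matrix.toEuclideanLin_apply, dotProduct, mul_comm]

lemma det_toEL (M : Matrix (Fin m) (Fin m) ℝ) :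
    LinearMap.det (toEL M : E →ₗ[ℝ] E) = M.det := by
  rw [Matrix.toEuclideanLin_eq_toLin, LinearMap.det_toLin]

lemma integral_comp_EL (M : Matrix (Fin m) (Fin m) ℝ) (hM : M.det ≠ 0)
    (g : E → ℝ) (hg : Continuous g) :
    ∫ z, g z = |M.det| * ∫ u, g (toEL M u) := by
  have hdet : LinearMap.det (toEL M : E →ₗ[ℝ] E) ≠ 0 := by rw [det_toEL]; exact hM
  have hmap := Measure.map_linearMap_addHaar_eq_smul_addHaar (volume : Measure E) hdet
  have hcont : Continuous (toEL M : E →ₗ[ℝ] E) := LinearMap.continuous_of_finiteDimensional _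
  have h1 : ∫ u, g (toEL M u) = ∫ z, g z ∂(Measure.map (toEL M : E →ₗ[ℝ] E) volume) := by
    rw [integral_map hcont.aemeasurable hg.aestronglyMeasurable]
  rw [h1, hmap, integral_smul_measure, det_toEL, smul_eq_mul,
    ENNReal.toReal_ofReal (abs_nonneg _), abs_inv]
  field_simp

lemma integrable_comp_EL (M : Matrix (Fin m) (Fin m) ℝ) (hM : M.det ≠ 0)
    (g : E → ℝ) (hg : Continuous g)
    (h : Integrable (fun u => g (toEL M u))) : Integrable g := by
  have hdet : LinearMap.det (toEL M : E →ₗ[ℝ] E) ≠ 0 := by rw [det_toEL]; exact hM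
  have hmap := Measure.map_linearMap_addHaar_eq_smul_addHaar (volume : Measure E) hdet
  have hcont : Continuous (toEL M : E →ₗ[ℝ] E) := LinearMap.continuous_of_finiteDimensional _
  have h2 : Integrable g (Measure.map (toEL M : E →ₗ[ℝ] E) volume) := by
    rw [integrable_map_measure hg.aestronglyMeasurable hcont.aemeasurable]
    exact h
  rw [hmap] at h2
  rw [det_toEL] at h2
  have hc0 : ENNReal.ofReal |(M.det)⁻¹| ≠ 0 := by
    simp [hM, ENNReal.ofReal_eq_zero, abs_pos, inv_ne_zero hM, lt_of_le_of_ne (abs_nonneg _)]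
  exact (integrable_smul_measure hc0 ENNReal.ofReal_ne_top).mp h2

section sqrtHelper
open scoped MatrixOrder Matrix.Norms.L2Operator

def Matrix.PosSemidef.sqrt {A : Matrix (Fin m) (Fin m) ℝ} (_ : A.PosSemidef) :
    Matrix (Fin m) (Fin m) ℝ := CFC.sqrt A

lemma Matrix.PosSemidef.posSemidef_sqrt {A : Matrix (Fin m) (Fin m) ℝ} (hA : A.PosSemidef) :
    hA.sqrt.PosSemidef := (CFC.sqrt_nonneg A).posSemidef

lemma Matrix.PosSemidef.sqrt_mul_self {A : Matrix (Fin m) (Fin m) ℝ} (hA : A.PosSemidef) :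
    hA.sqrt * hA.sqrt = A := CFC.sqrt_mul_sqrt_self A hA.nonneg

end sqrtHelper

variable {C : Matrix (Fin m) (Fin m) ℝ}

lemma continuous_gFun (C : Matrix (Fin m) (Fin m) ℝ) :
    Continuous (fun z : E => rexp (-(1/2) * ⟪z, toEL C⁻¹ z⟫)) := by
  have h1 : Continuous (toEL C⁻¹ : E →ₗ[ℝ] E) := LinearMap.continuous_of_finiteDimensional _
  exact Real.continuous_exp.comp (continuous_const.mul (continuous_id.inner h1))

lemma dot_aux (A B : Matrix (Fin m) (Fin m) ℝ) (x : Fin m → ℝ) :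
    (A *ᵥ x) ⬝ᵥ (B *ᵥ x) = x ⬝ᵥ ((Aᵀ * B) *ᵥ x) := by
  rw [← Matrix.mulVec_mulVec, Matrix.dotProduct_mulVec x Aᵀ, Matrix.vecMul_transpose]

lemma det_sqrt_nonneg (hC : C.PosDef) : 0 ≤ hC.posSemidef.sqrt.det := by
  have hsd := hC.posSemidef.posSemidef_sqrt
  rw [hsd.1.det_eq_prod_eigenvalues]
  exact Finset.prod_nonneg fun i _ => hsd.eigenvalues_nonneg i

lemma key_quad (hC : C.PosDef) (u : E) :
    ⟪toEL hC.posSemidef.sqrt u, toEL C⁻¹ (toEL hC.posSemidef.sqrt u)⟫ = ‖u‖ ^ 2 := by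
  set R := hC.posSemidef.sqrt with hR
  have hRR : R * R = C := hC.posSemidef.sqrt_mul_self
  have hRsymm : Rᵀ = R := by simpa using hC.posSemidef.posSemidef_sqrt.1.eq
  have hRdet : R.det ≠ 0 := by
    have h2 : R.det * R.det = C.det := by rw [← Matrix.det_mul, hRR]
    intro h; rw [h, mul_zero] at h2; exact hC.det_pos.ne' h2.symm
  have hCR : Rᵀ * (C⁻¹ * R) = 1 := by
    rw [hRsymm, ← Matrix.mul_assoc, ← hRR, Matrix.mul_inv_rev,
      ← Matrix.mul_assoc R R⁻¹ R⁻¹, Matrix.mul_nonsing_inv _ (isUnit_iff_ne_zero.mpr hRdet),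
      Matrix.one_mul, Matrix.nonsing_inv_mul _ (isUnit_iff_ne_zero.mpr hRdet)]
  rw [inner_toEL]
  have hev : ev (toEL R u) = R *ᵥ (ev u) := rfl
  rw [hev, Matrix.mulVec_mulVec, dot_aux, hCR, Matrix.one_mulVec]
  rw [← real_inner_self_eq_norm_sq]
  simp [PiLp.inner_apply, dotProduct, EuclideanSpace.norm_sq_eq, ← sq]

lemma integrable_gFun (hC : C.PosDef) :
    Integrable (fun z : E => rexp (-(1/2) * ⟪z, toEL C⁻¹ z⟫)) := by
  set R := hC.posSemidef.sqrt with hR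
  have hRdet : R.det ≠ 0 := by
    have h2 : R.det * R.det = C.det := by rw [← Matrix.det_mul, hC.posSemidef.sqrt_mul_self]
    intro h; rw [h, mul_zero] at h2; exact hC.det_pos.ne' h2.symm
  apply integrable_comp_EL R hRdet _ (continuous_gFun C)
  have : Integrable (fun v : E => rexp (-(1/2 : ℝ) * ‖v‖ ^ 2)) := by
    have h := (GaussianFourier.integrable_cexp_neg_mul_sq_norm_add (V := E)
      (b := ((1:ℝ)/2 : ℂ)) (by norm_num) 0 0).norm
    refine h.congr (Filter.Eventually.of_forall fun v => ?_)
    simp [Complex.norm_exp]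
    norm_cast
  refine this.congr (Filter.Eventually.of_forall fun u => ?_)
  simp only []
  rw [key_quad hC u]

lemma integral_gFun (hC : C.PosDef) :
    ∫ z : E, rexp (-(1/2) * ⟪z, toEL C⁻¹ z⟫) = C.det ^ ((1:ℝ)/2) * (2 * π) ^ ((m : ℝ)/2) := by
  set R := hC.posSemidef.sqrt with hR
  have h2 : R.det * R.det = C.det := by rw [← Matrix.det_mul, hC.posSemidef.sqrt_mul_self]
  have hRnn : 0 ≤ R.det := det_sqrt_nonneg hC
  have hRdet : R.det ≠ 0 := by
    intro h; rw [h, mul_zero] at h2; exact hC.det_pos.ne' h2.symm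
  rw [integral_comp_EL R hRdet _ (continuous_gFun C)]
  have heq : ∀ u : E, rexp (-(1/2) * ⟪toEL R u, toEL C⁻¹ (toEL R u)⟫)
      = rexp (-(1/2 : ℝ) * ‖u‖ ^ 2) := fun u => by rw [key_quad hC u]
  rw [integral_congr_ae (Filter.Eventually.of_forall heq)]
  rw [GaussianFourier.integral_rexp_neg_mul_sq_norm (by norm_num : (0:ℝ) < 1/2)]
  have hfr : (Module.finrank ℝ E : ℝ) = m := by simp
  rw [hfr, abs_of_nonneg hRnn]
  have hRdet' : R.det = C.det ^ ((1:ℝ)/2) := by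
    rw [← h2, ← sq, ← Real.rpow_natCast R.det 2, ← Real.rpow_mul hRnn]
    norm_num
  rw [hRdet', show π / (1/2 : ℝ) = 2 * π by ring]

lemma gaussDensity_eq (μ0 : E) (C : Matrix (Fin m) (Fin m) ℝ) (z : E) :
    gaussDensity m μ0 C z =
      (2 * π) ^ (-(m : ℝ) / 2) * C.det ^ (-(1 : ℝ) / 2) *
        rexp (-(1/2) * ⟪z - μ0, toEL C⁻¹ (z - μ0)⟫) := rfl

lemma integrable_gaussDensity (μ0 : E) (hC : C.PosDef) :
    Integrable (gaussDensity m μ0 C) := by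
  have h1 := (integrable_gFun hC).comp_sub_right μ0
  exact (h1.const_mul _).congr (Filter.Eventually.of_forall fun z => rfl)

lemma integral_gaussDensity (μ0 : E) (hC : C.PosDef) :
    ∫ z, gaussDensity m μ0 C z = 1 := by
  simp only [gaussDensity_eq]
  rw [integral_const_mul]
  have h1 : ∫ z : E, rexp (-(1/2) * ⟪z - μ0, toEL C⁻¹ (z - μ0)⟫)
      = ∫ z : E, rexp (-(1/2) * ⟪z, toEL C⁻¹ z⟫) := by
    exact integral_sub_right_eq_self (μ := (volume : Measure E))
      (fun z : E => rexp (-(1/2) * ⟪z, toEL C⁻¹ z⟫)) μ0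
  rw [h1, integral_gFun hC]
  have h2π : (0:ℝ) < 2 * π := by positivity
  rw [show ((2*π) ^ (-(m:ℝ)/2) * C.det ^ (-(1:ℝ)/2)) * (C.det ^ ((1:ℝ)/2) * (2*π) ^ ((m:ℝ)/2))
      = ((2*π) ^ (-(m:ℝ)/2) * (2*π) ^ ((m:ℝ)/2)) * (C.det ^ (-(1:ℝ)/2) * C.det ^ ((1:ℝ)/2)) by ring,
    ← Real.rpow_add h2π, ← Real.rpow_add hC.det_pos]
  rw [show -(m:ℝ)/2 + (m:ℝ)/2 = 0 by ring, show -(1:ℝ)/2 + (1:ℝ)/2 = 0 by ring]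
  norm_num



lemma dot_flip (M : Matrix (Fin m) (Fin m) ℝ) (u v : Fin m → ℝ) :
    u ⬝ᵥ M *ᵥ v = v ⬝ᵥ Mᵀ *ᵥ u := by
  rw [Matrix.dotProduct_mulVec u M v, dotProduct_comm, ← Matrix.mulVec_transpose]

lemma dot_symm {M : Matrix (Fin m) (Fin m) ℝ} (hM : Mᵀ = M) (u v : Fin m → ℝ) :
    u ⬝ᵥ M *ᵥ v = v ⬝ᵥ M *ᵥ u := by rw [dot_flip, hM]

lemma dot_aux2 (A B : Matrix (Fin m) (Fin m) ℝ) (x y : Fin m → ℝ) :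
    (A *ᵥ x) ⬝ᵥ (B *ᵥ y) = x ⬝ᵥ ((Aᵀ * B) *ᵥ y) := by
  rw [← Matrix.mulVec_mulVec, Matrix.dotProduct_mulVec x Aᵀ, Matrix.vecMul_transpose]

lemma quad_sub {M : Matrix (Fin m) (Fin m) ℝ} (hM : Mᵀ = M) (u v : Fin m → ℝ) :
    (u - v) ⬝ᵥ M *ᵥ (u - v) = u ⬝ᵥ M *ᵥ u - 2 * (v ⬝ᵥ M *ᵥ u) + v ⬝ᵥ M *ᵥ v := by
  have hsym : u ⬝ᵥ M *ᵥ v = v ⬝ᵥ M *ᵥ u := dot_symm hM u v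
  simp only [sub_dotProduct, Matrix.mulVec_sub, dotProduct_sub]
  rw [hsym]; ring

lemma complete_square {P Q : Matrix (Fin m) (Fin m) ℝ}
    (hP : Pᵀ = P) (hQ : Qᵀ = Q)
    (hPu : IsUnit P.det) (hQu : IsUnit Q.det) (hWu : IsUnit (P + Q).det)
    (a b z : Fin m → ℝ) :
    (a - z) ⬝ᵥ P *ᵥ (a - z) + (z - b) ⬝ᵥ Q *ᵥ (z - b) =
      (a - b) ⬝ᵥ (P⁻¹ + Q⁻¹)⁻¹ *ᵥ (a - b) +
      (z - (P + Q)⁻¹ *ᵥ (P *ᵥ a + Q *ᵥ b)) ⬝ᵥ (P + Q) *ᵥ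
        (z - (P + Q)⁻¹ *ᵥ (P *ᵥ a + Q *ᵥ b)) := by
  set W := P + Q with hW
  set c : Fin m → ℝ := W⁻¹ *ᵥ (P *ᵥ a + Q *ᵥ b) with hc
  have hWsymm : Wᵀ = W := by rw [hW, Matrix.transpose_add, hP, hQ]
  have hWinv_symm : (W⁻¹)ᵀ = W⁻¹ := by rw [Matrix.transpose_nonsing_inv, hWsymm]
  have hB1 : (P⁻¹ + Q⁻¹)⁻¹ = P * W⁻¹ * Q := by
    apply Matrix.inv_eq_right_inv
    have h1 : (P⁻¹ + Q⁻¹) * P = 1 + Q⁻¹ * P := by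
      rw [Matrix.add_mul, Matrix.nonsing_inv_mul _ hPu]
    have h2 : (1 : Matrix (Fin m) (Fin m) ℝ) + Q⁻¹ * P = Q⁻¹ * W := by
      rw [hW, Matrix.mul_add, Matrix.nonsing_inv_mul _ hQu, add_comm]
    have e1 : (P⁻¹ + Q⁻¹) * (P * W⁻¹ * Q) = ((P⁻¹ + Q⁻¹) * P) * (W⁻¹ * Q) := by
      simp only [Matrix.mul_assoc]
    rw [e1, h1, h2, Matrix.mul_assoc Q⁻¹ W, ← Matrix.mul_assoc W,
      Matrix.mul_nonsing_inv _ hWu, Matrix.one_mul, Matrix.nonsing_inv_mul _ hQu]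
  have hB2 : (P⁻¹ + Q⁻¹)⁻¹ = Q * W⁻¹ * P := by
    apply Matrix.inv_eq_left_inv
    have h1 : P * (P⁻¹ + Q⁻¹) = 1 + P * Q⁻¹ := by
      rw [Matrix.mul_add, Matrix.mul_nonsing_inv _ hPu]
    have h2 : (1 : Matrix (Fin m) (Fin m) ℝ) + P * Q⁻¹ = W * Q⁻¹ := by
      rw [hW, Matrix.add_mul, Matrix.mul_nonsing_inv _ hQu, add_comm]
    have e1 : Q * W⁻¹ * P * (P⁻¹ + Q⁻¹) = Q * (W⁻¹ * (P * (P⁻¹ + Q⁻¹))) := by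
      simp only [Matrix.mul_assoc]
    rw [e1, h1, h2, ← Matrix.mul_assoc W⁻¹, Matrix.nonsing_inv_mul _ hWu,
      Matrix.one_mul, Matrix.mul_nonsing_inv _ hQu]
  have hB3 : (P⁻¹ + Q⁻¹)⁻¹ = P - P * W⁻¹ * P := by
    have hPW : P * W⁻¹ * W = P := by
      rw [Matrix.mul_assoc, Matrix.nonsing_inv_mul _ hWu, Matrix.mul_one]
    have : P - P * W⁻¹ * P = P * W⁻¹ * W - P * W⁻¹ * P := by rw [hPW]
    rw [this, ← Matrix.mul_sub, hW, add_sub_cancel_left, ← hB1]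
  have hB4 : (P⁻¹ + Q⁻¹)⁻¹ = Q - Q * W⁻¹ * Q := by
    have hQW : Q * W⁻¹ * W = Q := by
      rw [Matrix.mul_assoc, Matrix.nonsing_inv_mul _ hWu, Matrix.mul_one]
    have : Q - Q * W⁻¹ * Q = Q * W⁻¹ * W - Q * W⁻¹ * Q := by rw [hQW]
    rw [this, ← Matrix.mul_sub, hW, add_sub_cancel_right, ← hB2]
  have hBsymm : ((P⁻¹ + Q⁻¹)⁻¹)ᵀ = (P⁻¹ + Q⁻¹)⁻¹ := by
    rw [hB1, Matrix.transpose_mul, Matrix.transpose_mul, hP, hQ, hWinv_symm,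
      ← Matrix.mul_assoc, ← hB2]
    exact hB1
  have hzb : b ⬝ᵥ Q *ᵥ z = z ⬝ᵥ Q *ᵥ b := dot_symm hQ b z
  have hzW : z ⬝ᵥ W *ᵥ z = z ⬝ᵥ P *ᵥ z + z ⬝ᵥ Q *ᵥ z := by
    rw [hW, Matrix.add_mulVec, dotProduct_add]
  have hcz : c ⬝ᵥ W *ᵥ z = z ⬝ᵥ P *ᵥ a + z ⬝ᵥ Q *ᵥ b := by
    rw [dot_symm hWsymm c z, hc, Matrix.mulVec_mulVec, Matrix.mul_nonsing_inv _ hWu,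
      Matrix.one_mulVec, dotProduct_add]
  have hcc : c ⬝ᵥ W *ᵥ c = a ⬝ᵥ (P * W⁻¹ * P) *ᵥ a + 2 * (b ⬝ᵥ (Q * W⁻¹ * P) *ᵥ a)
      + b ⬝ᵥ (Q * W⁻¹ * Q) *ᵥ b := by
    have h0 : W *ᵥ c = P *ᵥ a + Q *ᵥ b := by
      rw [hc, Matrix.mulVec_mulVec, Matrix.mul_nonsing_inv _ hWu, Matrix.one_mulVec]
    rw [h0, hc, Matrix.mulVec_add, Matrix.mulVec_mulVec, Matrix.mulVec_mulVec,
      add_dotProduct, dotProduct_add, dotProduct_add]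
    rw [dot_aux2, dot_aux2, dot_aux2, dot_aux2]
    have hT : ∀ X Y : Matrix (Fin m) (Fin m) ℝ, (X * Y)ᵀ = Yᵀ * Xᵀ := fun X Y =>
      Matrix.transpose_mul X Y
    rw [hT, hT, hWinv_symm, hP, hQ]
    have hflip : a ⬝ᵥ (P * W⁻¹ * Q) *ᵥ b = b ⬝ᵥ (Q * W⁻¹ * P) *ᵥ a := by
      rw [dot_flip, Matrix.transpose_mul, Matrix.transpose_mul, hP, hQ, hWinv_symm,
        Matrix.mul_assoc]
    rw [Matrix.mul_assoc P W⁻¹ P, Matrix.mul_assoc P W⁻¹ Q, Matrix.mul_assoc Q W⁻¹ P,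
      Matrix.mul_assoc Q W⁻¹ Q] at *
    rw [hflip]
    ring
  have eB_aa : a ⬝ᵥ (P⁻¹ + Q⁻¹)⁻¹ *ᵥ a = a ⬝ᵥ P *ᵥ a - a ⬝ᵥ (P * W⁻¹ * P) *ᵥ a := by
    rw [hB3, Matrix.sub_mulVec, dotProduct_sub]
  have eB_bb : b ⬝ᵥ (P⁻¹ + Q⁻¹)⁻¹ *ᵥ b = b ⬝ᵥ Q *ᵥ b - b ⬝ᵥ (Q * W⁻¹ * Q) *ᵥ b := by
    rw [hB4, Matrix.sub_mulVec, dotProduct_sub]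
  have eB_ba : b ⬝ᵥ (P⁻¹ + Q⁻¹)⁻¹ *ᵥ a = b ⬝ᵥ (Q * W⁻¹ * P) *ᵥ a := by rw [hB2]
  rw [quad_sub hP a z, quad_sub hQ z b, quad_sub hWsymm z c, quad_sub hBsymm a b,
    hzb, hzW, hcz, hcc, eB_aa, eB_bb, eB_ba]
  ring

variable {t : ℝ}

lemma smul_one_inv (ht : t ≠ 0) :
    (t • (1 : Matrix (Fin m) (Fin m) ℝ))⁻¹ = t⁻¹ • 1 := by
  apply Matrix.inv_eq_right_inv
  rw [Matrix.smul_mul, Matrix.one_mul, smul_smul, mul_inv_cancel₀ ht, one_smul]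

lemma posDef_smul_one (ht : 0 < t) : (t • (1 : Matrix (Fin m) (Fin m) ℝ)).PosDef := by
  rw [Matrix.smul_one_eq_diagonal]
  exact Matrix.PosDef.diagonal fun _ => ht

lemma det_smul_one' : (t • (1 : Matrix (Fin m) (Fin m) ℝ)).det = t ^ m := by
  simp [Matrix.det_smul]

lemma dot_self_eq_norm_sq (v : E) : (ev v) ⬝ᵥ (ev v) = ‖v‖ ^ 2 := by
  rw [← real_inner_self_eq_norm_sq]
  simp [PiLp.inner_apply, dotProduct, EuclideanSpace.norm_sq_eq, ← sq]

lemma heatKernel_eq (ht : 0 < t) (v : E) :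
    heatKernel m (t/2) v = gaussDensity m 0 (t • 1) v := by
  unfold heatKernel gaussDensity
  have hc : (4 * π * (t/2)) ^ (-(m:ℝ)/2)
      = (2 * π) ^ (-(m:ℝ)/2) * ((t • (1 : Matrix (Fin m) (Fin m) ℝ)).det) ^ (-(1:ℝ)/2) := by
    rw [det_smul_one', ← Real.rpow_natCast t m, ← Real.rpow_mul ht.le,
      show (m:ℝ) * (-(1)/2) = -(m:ℝ)/2 by ring,
      show 4 * π * (t/2) = (2*π) * t by ring,
      Real.mul_rpow (by positivity) ht.le]
  have he : -‖v‖ ^ 2 / (4 * (t/2)) = -(1/2) * ⟪v - 0, toEL (t • (1:Matrix (Fin m) (Fin m) ℝ))⁻¹ (v - 0)⟫ := by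
    rw [sub_zero, smul_one_inv ht.ne', inner_toEL]
    have h1 : (t⁻¹ • (1:Matrix (Fin m) (Fin m) ℝ)) *ᵥ (ev v) = t⁻¹ • (ev v) := by
      rw [Matrix.smul_mulVec, Matrix.one_mulVec]
    rw [h1, dotProduct_smul, dot_self_eq_norm_sq]
    field_simp
    rw [smul_eq_mul]
    field_simp
    ring
  rw [hc, he]

lemma mul_exp_helper {c1 c2 c3 c4 e1 e2 e3 e4 : ℝ} (hc : c1 * c2 = c3 * c4)
    (he : e1 + e2 = e3 + e4) :
    (c1 * rexp e1) * (c2 * rexp e2) = (c3 * rexp e3) * (c4 * rexp e4) := by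
  have h1 : (c1 * rexp e1) * (c2 * rexp e2) = (c1 * c2) * rexp (e1 + e2) := by
    rw [Real.exp_add]; ring
  have h2 : (c3 * rexp e3) * (c4 * rexp e4) = (c3 * c4) * rexp (e3 + e4) := by
    rw [Real.exp_add]; ring
  rw [h1, h2, hc, he]

lemma conv_pointwise (ht : 0 < t) {S : Matrix (Fin m) (Fin m) ℝ} (hS : S.PosDef)
    (μ0 y z : E) :
    gaussDensity m 0 (t • 1) (y - z) * gaussDensity m μ0 S z =
      gaussDensity m μ0 (S + t • 1) y *
        gaussDensity m (toEL (S⁻¹ + t⁻¹ • 1)⁻¹ (toEL S⁻¹ μ0 + t⁻¹ • y))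
          (S⁻¹ + t⁻¹ • 1)⁻¹ z := by
  have hSu : IsUnit S.det := isUnit_iff_ne_zero.mpr hS.det_pos.ne'
  have hT : ((t:ℝ)⁻¹ • (1 : Matrix (Fin m) (Fin m) ℝ)).PosDef :=
    posDef_smul_one (inv_pos.mpr ht)
  have hW : (S⁻¹ + t⁻¹ • (1 : Matrix (Fin m) (Fin m) ℝ)).PosDef := hS.inv.add hT
  have hWu : IsUnit (S⁻¹ + t⁻¹ • (1 : Matrix (Fin m) (Fin m) ℝ)).det :=
    isUnit_iff_ne_zero.mpr hW.det_pos.ne'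
  have hSt : (S + t • (1 : Matrix (Fin m) (Fin m) ℝ)).PosDef := hS.add (posDef_smul_one ht)
  have hD : ((S⁻¹ + t⁻¹ • (1 : Matrix (Fin m) (Fin m) ℝ))⁻¹).PosDef := hW.inv
  -- determinant identity
  have hWeq : S⁻¹ + t⁻¹ • (1 : Matrix (Fin m) (Fin m) ℝ)
      = t⁻¹ • (S⁻¹ * (S + t • 1)) := by
    rw [Matrix.mul_add, Matrix.nonsing_inv_mul _ hSu, Matrix.mul_smul, Matrix.mul_one,
      smul_add, smul_smul, inv_mul_cancel₀ ht.ne', one_smul, add_comm]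
  have hdet : ((t • (1 : Matrix (Fin m) (Fin m) ℝ)).det) * S.det
      = ((S + t • (1 : Matrix (Fin m) (Fin m) ℝ)).det)
        * (((S⁻¹ + t⁻¹ • (1 : Matrix (Fin m) (Fin m) ℝ))⁻¹).det) := by
    have h1 : ((S⁻¹ + t⁻¹ • (1 : Matrix (Fin m) (Fin m) ℝ))⁻¹).det
        = ((S⁻¹ + t⁻¹ • (1 : Matrix (Fin m) (Fin m) ℝ)).det)⁻¹ := by
      simp [Matrix.det_nonsing_inv, Ring.inverse_eq_inv']
    have h2 : (S⁻¹ + t⁻¹ • (1 : Matrix (Fin m) (Fin m) ℝ)).det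
        = (t⁻¹) ^ m * (S.det⁻¹ * (S + t • 1).det) := by
      rw [hWeq, Matrix.det_smul, Matrix.det_mul]
      simp [Matrix.det_nonsing_inv, Ring.inverse_eq_inv']
    rw [h1, h2, det_smul_one']
    have := hS.det_pos
    have := hSt.det_pos
    field_simp
    rw [← mul_pow, mul_one_div_cancel ht.ne', one_pow]
  -- constants
  have hconst : ((2 * π) ^ (-(m : ℝ) / 2) * ((t • (1 : Matrix (Fin m) (Fin m) ℝ)).det) ^ (-(1:ℝ)/2))
      * ((2 * π) ^ (-(m : ℝ) / 2) * S.det ^ (-(1:ℝ)/2))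
      = ((2 * π) ^ (-(m : ℝ) / 2) * ((S + t • (1 : Matrix (Fin m) (Fin m) ℝ)).det) ^ (-(1:ℝ)/2))
      * ((2 * π) ^ (-(m : ℝ) / 2)
          * (((S⁻¹ + t⁻¹ • (1 : Matrix (Fin m) (Fin m) ℝ))⁻¹).det) ^ (-(1:ℝ)/2)) := by
    have e1 : ((t • (1 : Matrix (Fin m) (Fin m) ℝ)).det) ^ (-(1:ℝ)/2) * S.det ^ (-(1:ℝ)/2)
        = (((t • (1 : Matrix (Fin m) (Fin m) ℝ)).det) * S.det) ^ (-(1:ℝ)/2) :=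
      (Real.mul_rpow (posDef_smul_one ht).det_pos.le hS.det_pos.le).symm
    have e2 : ((S + t • (1 : Matrix (Fin m) (Fin m) ℝ)).det) ^ (-(1:ℝ)/2)
          * (((S⁻¹ + t⁻¹ • (1 : Matrix (Fin m) (Fin m) ℝ))⁻¹).det) ^ (-(1:ℝ)/2)
        = (((S + t • (1 : Matrix (Fin m) (Fin m) ℝ)).det)
            * (((S⁻¹ + t⁻¹ • (1 : Matrix (Fin m) (Fin m) ℝ))⁻¹).det)) ^ (-(1:ℝ)/2) :=
      (Real.mul_rpow hSt.det_pos.le hD.det_pos.le).symm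
    calc ((2 * π) ^ (-(m : ℝ) / 2) * ((t • (1 : Matrix (Fin m) (Fin m) ℝ)).det) ^ (-(1:ℝ)/2))
        * ((2 * π) ^ (-(m : ℝ) / 2) * S.det ^ (-(1:ℝ)/2))
        = ((2 * π) ^ (-(m : ℝ) / 2) * (2 * π) ^ (-(m : ℝ) / 2))
          * (((t • (1 : Matrix (Fin m) (Fin m) ℝ)).det) ^ (-(1:ℝ)/2) * S.det ^ (-(1:ℝ)/2)) := by
          ring
      _ = ((2 * π) ^ (-(m : ℝ) / 2) * (2 * π) ^ (-(m : ℝ) / 2))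
          * ((((S + t • (1 : Matrix (Fin m) (Fin m) ℝ)).det)
              * (((S⁻¹ + t⁻¹ • (1 : Matrix (Fin m) (Fin m) ℝ))⁻¹).det)) ^ (-(1:ℝ)/2)) := by
          rw [e1, hdet]
      _ = _ := by rw [← e2]; ring
  -- exponents
  have hexp : (-(1/2) * ⟪y - z - 0, toEL (t • (1 : Matrix (Fin m) (Fin m) ℝ))⁻¹ (y - z - 0)⟫)
      + (-(1/2) * ⟪z - μ0, toEL S⁻¹ (z - μ0)⟫)
      = (-(1/2) * ⟪y - μ0, toEL (S + t • (1 : Matrix (Fin m) (Fin m) ℝ))⁻¹ (y - μ0)⟫)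
      + (-(1/2) * ⟪z - toEL (S⁻¹ + t⁻¹ • 1)⁻¹ (toEL S⁻¹ μ0 + t⁻¹ • y),
          toEL ((S⁻¹ + t⁻¹ • (1 : Matrix (Fin m) (Fin m) ℝ))⁻¹)⁻¹
            (z - toEL (S⁻¹ + t⁻¹ • 1)⁻¹ (toEL S⁻¹ μ0 + t⁻¹ • y))⟫) := by
    have hPt : ((t:ℝ)⁻¹ • (1 : Matrix (Fin m) (Fin m) ℝ))ᵀ = t⁻¹ • 1 := by
      rw [Matrix.transpose_smul, Matrix.transpose_one]
    have hQt : (S⁻¹)ᵀ = S⁻¹ := by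
      rw [Matrix.transpose_nonsing_inv]
      congr 1
      simpa using hS.isHermitian.eq
    have hPu : IsUnit ((t:ℝ)⁻¹ • (1 : Matrix (Fin m) (Fin m) ℝ)).det :=
      isUnit_iff_ne_zero.mpr hT.det_pos.ne'
    have hQu : IsUnit (S⁻¹).det := isUnit_iff_ne_zero.mpr hS.inv.det_pos.ne'
    have hWu' : IsUnit ((t:ℝ)⁻¹ • (1 : Matrix (Fin m) (Fin m) ℝ) + S⁻¹).det := by
      rw [add_comm]; exact hWu
    have hKey := complete_square hPt hQt hPu hQu hWu' (ev y) (ev μ0) (ev z)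
    -- massage hKey
    have harg : ((t:ℝ)⁻¹ • (1 : Matrix (Fin m) (Fin m) ℝ)) *ᵥ (ev y) = t⁻¹ • (ev y) := by
      rw [Matrix.smul_mulVec, Matrix.one_mulVec]
    rw [smul_one_inv (inv_ne_zero ht.ne'), inv_inv, Matrix.nonsing_inv_nonsing_inv _ hSu,
      harg, add_comm ((t:ℝ)⁻¹ • (ev y)) (S⁻¹ *ᵥ (ev μ0)),
      add_comm ((t:ℝ)⁻¹ • (1 : Matrix (Fin m) (Fin m) ℝ)) S⁻¹,
      add_comm (t • (1 : Matrix (Fin m) (Fin m) ℝ)) S] at hKey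
    -- rewrite goal to dotProduct form
    rw [sub_zero, smul_one_inv ht.ne', Matrix.nonsing_inv_nonsing_inv _ hWu,
      inner_toEL, inner_toEL, inner_toEL, inner_toEL]
    have hev1 : ev (y - z) = ev y - ev z := by simp
    have hev2 : ev (z - μ0) = ev z - ev μ0 := by simp
    have hev3 : ev (y - μ0) = ev y - ev μ0 := by simp
    have hev4 : ev (z - toEL (S⁻¹ + t⁻¹ • 1)⁻¹ (toEL S⁻¹ μ0 + t⁻¹ • y))
        = ev z - (S⁻¹ + t⁻¹ • 1)⁻¹ *ᵥ (S⁻¹ *ᵥ (ev μ0) + t⁻¹ • (ev y)) := by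
      simp [Matrix.toEuclideanLin_apply]
    rw [hev1, hev2, hev3, hev4]
    have hP1 : ((t:ℝ)⁻¹ • (1 : Matrix (Fin m) (Fin m) ℝ)) *ᵥ (ev y - ev z)
        = t⁻¹ • (ev y - ev z) := by
      rw [Matrix.smul_mulVec, Matrix.one_mulVec]
    linear_combination (-(1:ℝ)/2) * hKey
  exact mul_exp_helper hconst hexp

lemma conv_integrable (ht : 0 < t) {S : Matrix (Fin m) (Fin m) ℝ} (hS : S.PosDef)
    (μ0 y : E) :
    Integrable (fun z => gaussDensity m 0 (t • 1) (y - z) * gaussDensity m μ0 S z) := by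
  have hT : ((t:ℝ)⁻¹ • (1 : Matrix (Fin m) (Fin m) ℝ)).PosDef :=
    posDef_smul_one (inv_pos.mpr ht)
  have hD : ((S⁻¹ + t⁻¹ • (1 : Matrix (Fin m) (Fin m) ℝ))⁻¹).PosDef := (hS.inv.add hT).inv
  have h := (integrable_gaussDensity
    (toEL (S⁻¹ + t⁻¹ • 1)⁻¹ (toEL S⁻¹ μ0 + t⁻¹ • y)) hD).const_mul
    (gaussDensity m μ0 (S + t • 1) y)
  exact h.congr (Filter.Eventually.of_forall fun z => (conv_pointwise ht hS μ0 y z).symm)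

lemma conv_integral (ht : 0 < t) {S : Matrix (Fin m) (Fin m) ℝ} (hS : S.PosDef)
    (μ0 y : E) :
    ∫ z, gaussDensity m 0 (t • 1) (y - z) * gaussDensity m μ0 S z
      = gaussDensity m μ0 (S + t • 1) y := by
  have hT : ((t:ℝ)⁻¹ • (1 : Matrix (Fin m) (Fin m) ℝ)).PosDef :=
    posDef_smul_one (inv_pos.mpr ht)
  have hD : ((S⁻¹ + t⁻¹ • (1 : Matrix (Fin m) (Fin m) ℝ))⁻¹).PosDef := (hS.inv.add hT).inv
  rw [integral_congr_ae (Filter.Eventually.of_forall fun z => conv_pointwise ht hS μ0 y z),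
    integral_const_mul, integral_gaussDensity _ hD, mul_one]

lemma mixture_integral {K : ℕ} (ht : 0 < t) (w : Fin K → ℝ) (μ : Fin K → E)
    (S : Fin K → Matrix (Fin m) (Fin m) ℝ) (hS : ∀ k, (S k).PosDef) (y : E) :
    ∫ z, heatKernel m (t/2) (y - z) * ∑ k, w k * gaussDensity m (μ k) (S k) z
      = ∑ k, w k * gaussDensity m (μ k) (S k + t • 1) y := by
  have h1 : ∀ z : E, heatKernel m (t/2) (y - z) * ∑ k, w k * gaussDensity m (μ k) (S k) z
      = ∑ k, w k * (gaussDensity m 0 (t • 1) (y - z) * gaussDensity m (μ k) (S k) z) := by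
    intro z
    rw [heatKernel_eq ht, Finset.mul_sum]
    exact Finset.sum_congr rfl fun k _ => by ring
  rw [integral_congr_ae (Filter.Eventually.of_forall h1),
    integral_finset_sum _ (fun k _ => (conv_integrable ht (hS k) (μ k) y).const_mul (w k))]
  exact Finset.sum_congr rfl fun k _ => by
    rw [integral_const_mul, conv_integral ht (hS k) (μ k) y]

lemma gaussDensity_pos {C : Matrix (Fin m) (Fin m) ℝ} (hC : C.PosDef) (μ0 x : E) :
    0 < gaussDensity m μ0 C x := by
  unfold gaussDensity
  have := hC.det_pos
  positivity

lemma hasGradientAt_gauss {A : Matrix (Fin m) (Fin m) ℝ} (hA : Aᵀ = A) (c : ℝ) (μ0 x : E) :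
    HasGradientAt (fun y : E => c * rexp (-(1/2) * ⟪y - μ0, toEL A (y - μ0)⟫))
      (-((1:ℝ)/2) • ((c * rexp (-(1/2) * ⟪x - μ0, toEL A (x - μ0)⟫)) •
        ((2:ℝ) • toEL A (x - μ0)))) x := by
  have hsub : HasFDerivAt (fun y : E => y - μ0) (ContinuousLinearMap.id ℝ E) x :=
    (hasFDerivAt_id x).sub_const μ0
  have hlin : HasFDerivAt (fun y : E => toEL A (y - μ0))
      ((LinearMap.toContinuousLinearMap (toEL A)).comp (ContinuousLinearMap.id ℝ E)) x :=
    (LinearMap.toContinuousLinearMap (toEL A)).hasFDerivAt.comp x hsub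
  have hq := (hsub.inner ℝ hlin)
  have hq2 := ((hq.const_mul (-(1/2) : ℝ)).exp).const_mul c
  rw [hasGradientAt_iff_hasFDerivAt]
  refine HasFDerivAt.congr_fderiv hq2 (Eq.symm ?_)
  apply ContinuousLinearMap.ext
  intro h
  simp only [InnerProductSpace.toDual_apply_apply, ContinuousLinearMap.smul_apply,
    fderivInnerCLM_apply, ContinuousLinearMap.comp_apply, ContinuousLinearMap.prod_apply,
    ContinuousLinearMap.id_apply, LinearMap.coe_toContinuousLinearMap']
  have hswap : ⟪x - μ0, toEL A h⟫ = ⟪toEL A (x - μ0), h⟫ := by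
    rw [inner_toEL, dot_symm hA, ← inner_toEL, real_inner_comm]
  rw [real_inner_smul_left, real_inner_smul_left, real_inner_smul_left]
  rw [hswap, real_inner_comm h (toEL A (x - μ0))]
  simp only [smul_eq_mul]
  ring

lemma hasGradientAt_gauss' {A : Matrix (Fin m) (Fin m) ℝ} (hA : Aᵀ = A) (c : ℝ) (μ0 x : E) :
    HasGradientAt (fun y : E => c * rexp (-(1/2) * ⟪y - μ0, toEL A (y - μ0)⟫))
      (-(c * rexp (-(1/2) * ⟪x - μ0, toEL A (x - μ0)⟫)) • toEL A (x - μ0)) x := by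
  have h := hasGradientAt_gauss hA c μ0 x
  convert h using 1
  rw [smul_smul, smul_smul]
  congr 1
  ring

lemma inv_one_add_smul_inv (ht : 0 < t) {S : Matrix (Fin m) (Fin m) ℝ} (hS : S.PosDef) :
    (1 + t⁻¹ • S)⁻¹ = t • (S + t • 1)⁻¹ := by
  have hStu : IsUnit (S + t • (1 : Matrix (Fin m) (Fin m) ℝ)).det :=
    isUnit_iff_ne_zero.mpr ((hS.add (posDef_smul_one ht)).det_pos).ne'
  apply Matrix.inv_eq_right_inv
  have hsmul : (1 + t⁻¹ • S : Matrix (Fin m) (Fin m) ℝ) * (t • (S + t • 1)⁻¹)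
      = (t • (1 + t⁻¹ • S)) * (S + t • 1)⁻¹ := by
    rw [Matrix.mul_smul, Matrix.smul_mul]
  have h2 : t • (1 + t⁻¹ • S : Matrix (Fin m) (Fin m) ℝ) = S + t • 1 := by
    rw [smul_add, smul_smul, mul_inv_cancel₀ ht.ne', one_smul, add_comm]
  rw [hsmul, h2, Matrix.mul_nonsing_inv _ hStu]

lemma inv_one_add_smul_inv' (ht : 0 < t) {S : Matrix (Fin m) (Fin m) ℝ} (hS : S.PosDef) :
    (1 + t • S⁻¹)⁻¹ = 1 - t • (S + t • 1)⁻¹ := by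
  have hSu : IsUnit S.det := isUnit_iff_ne_zero.mpr hS.det_pos.ne'
  have hStu : IsUnit (S + t • (1 : Matrix (Fin m) (Fin m) ℝ)).det :=
    isUnit_iff_ne_zero.mpr ((hS.add (posDef_smul_one ht)).det_pos).ne'
  apply Matrix.inv_eq_right_inv
  have h1 : (1 + t • S⁻¹ : Matrix (Fin m) (Fin m) ℝ) = S⁻¹ * (S + t • 1) := by
    rw [Matrix.mul_add, Matrix.nonsing_inv_mul _ hSu, Matrix.mul_smul, Matrix.mul_one]
  have h2 : (S + t • 1 : Matrix (Fin m) (Fin m) ℝ) * (1 - t • (S + t • 1)⁻¹) = S := by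
    rw [Matrix.mul_sub, Matrix.mul_one, Matrix.mul_smul, Matrix.mul_nonsing_inv _ hStu,
      add_sub_cancel_right]
  rw [h1, Matrix.mul_assoc, h2, Matrix.nonsing_inv_mul _ hSu]

lemma hasGradientAt_mixture_log {K : ℕ} (ht : 0 < t) (w : Fin K → ℝ) (μ : Fin K → E)
    (S : Fin K → Matrix (Fin m) (Fin m) ℝ) (hS : ∀ k, (S k).PosDef)
    (x : E) (hne : (∑ j, w j * gaussDensity m (μ j) (S j + t • 1) x) ≠ 0) :
    HasGradientAt (fun y : E => ∑ k, w k * gaussDensity m (μ k) (S k + t • 1) y)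
      (∑ k, (-(w k * gaussDensity m (μ k) (S k + t • 1) x)) •
        toEL (S k + t • 1)⁻¹ (x - μ k)) x ∧
    HasGradientAt (fun y : E => Real.log (∑ k, w k * gaussDensity m (μ k) (S k + t • 1) y))
      ((∑ j, w j * gaussDensity m (μ j) (S j + t • 1) x)⁻¹ •
        ∑ k, (-(w k * gaussDensity m (μ k) (S k + t • 1) x)) •
          toEL (S k + t • 1)⁻¹ (x - μ k)) x := by
  have hAs : ∀ k, ((S k + t • (1 : Matrix (Fin m) (Fin m) ℝ))⁻¹)ᵀ = (S k + t • 1)⁻¹ := by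
    intro k
    rw [Matrix.transpose_nonsing_inv]
    congr 1
    simpa using ((hS k).add (posDef_smul_one ht)).isHermitian.eq
  have hGk : ∀ k, HasGradientAt (fun y : E => w k * gaussDensity m (μ k) (S k + t • 1) y)
      ((-(w k * gaussDensity m (μ k) (S k + t • 1) x)) • toEL (S k + t • 1)⁻¹ (x - μ k)) x := by
    intro k
    have h := hasGradientAt_gauss' (hAs k)
      (w k * ((2 * π) ^ (-(m : ℝ) / 2) * ((S k + t • (1:Matrix (Fin m) (Fin m) ℝ)).det) ^ (-(1:ℝ)/2)))
      (μ k) x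
    have hfeq : (fun y : E => w k * gaussDensity m (μ k) (S k + t • 1) y)
        = (fun y : E => (w k * ((2 * π) ^ (-(m : ℝ) / 2)
            * ((S k + t • (1:Matrix (Fin m) (Fin m) ℝ)).det) ^ (-(1:ℝ)/2)))
          * rexp (-(1/2) * ⟪y - μ k, toEL (S k + t • 1)⁻¹ (y - μ k)⟫)) := by
      funext y
      unfold gaussDensity
      ring
    rw [hfeq]
    convert h using 2
    unfold gaussDensity
    ring
  have hsum : HasGradientAt (fun y : E => ∑ k, w k * gaussDensity m (μ k) (S k + t • 1) y)
      (∑ k, (-(w k * gaussDensity m (μ k) (S k + t • 1) x)) •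
        toEL (S k + t • 1)⁻¹ (x - μ k)) x := by
    rw [hasGradientAt_iff_hasFDerivAt]
    have hfd := HasFDerivAt.fun_sum
      (fun k (_ : k ∈ Finset.univ) => hasGradientAt_iff_hasFDerivAt.mp (hGk k))
    refine hfd.congr_fderiv (Eq.symm ?_)
    simp [map_sum]
  refine ⟨hsum, ?_⟩
  rw [hasGradientAt_iff_hasFDerivAt]
  have hlog := (hasGradientAt_iff_hasFDerivAt.mp hsum).log hne
  refine HasFDerivAt.congr_fderiv hlog (Eq.symm ?_)
  simp [_root_.map_smul]

/-- For a Gaussian mixture `p₀ = ∑ π_k N(μ_k, Σ_k)`, the DAE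
`Φ_t(x) = x + t ∇ log(W_{t/2} * p₀)(x)` is the responsibility-weighted combination
`Φ_t(x) = ∑ γ_{kt}(x) [(I + tΣ_k⁻¹)⁻¹ x + (I + t⁻¹Σ_k)⁻¹ μ_k]` with
`γ_{kt}(x) = π_k N(x; μ_k, Σ_k + tI) / ∑ⱼ πⱼ N(x; μⱼ, Σⱼ + tI)`. -/
theorem dae_gaussian_mixture (m K : ℕ) (t : ℝ) (ht : 0 < t)
    (w : Fin K → ℝ) (hw : ∀ k, 0 < w k) (hw1 : ∑ k, w k = 1)
    (μ : Fin K → EuclideanSpace ℝ (Fin m))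
    (S : Fin K → Matrix (Fin m) (Fin m) ℝ) (hS : ∀ k, (S k).PosDef)
    (x : EuclideanSpace ℝ (Fin m)) :
    x + t • gradient
        (fun y => Real.log
          (∫ z, heatKernel m (t / 2) (y - z) * ∑ k, w k * gaussDensity m (μ k) (S k) z)) x =
      ∑ k, (w k * gaussDensity m (μ k) (S k + t • 1) x /
            ∑ j, w j * gaussDensity m (μ j) (S j + t • 1) x) •
          (Matrix.toEuclideanLin (1 + t • (S k)⁻¹)⁻¹ x +
            Matrix.toEuclideanLin (1 + t⁻¹ • S k)⁻¹ (μ k)) := by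
  rcases isEmpty_or_nonempty (Fin K) with hK | hK
  · exact absurd hw1 (by simp [Finset.univ_eq_empty])
  have hSt : ∀ k, (S k + t • (1 : Matrix (Fin m) (Fin m) ℝ)).PosDef :=
    fun k => (hS k).add (posDef_smul_one ht)
  have hfx_pos : 0 < ∑ j, w j * gaussDensity m (μ j) (S j + t • 1) x :=
    Finset.sum_pos (fun j _ => mul_pos (hw j) (gaussDensity_pos (hSt j) _ _))
      Finset.univ_nonempty
  have hfun : (fun y : EuclideanSpace ℝ (Fin m) => Real.log
      (∫ z, heatKernel m (t / 2) (y - z) * ∑ k, w k * gaussDensity m (μ k) (S k) z))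
      = fun y => Real.log (∑ k, w k * gaussDensity m (μ k) (S k + t • 1) y) :=
    funext fun y => by rw [mixture_integral ht w μ S hS y]
  rw [hfun, ((hasGradientAt_mixture_log ht w μ S hS x hfx_pos.ne').2).gradient]
  set fx := ∑ j, w j * gaussDensity m (μ j) (S j + t • 1) x with hfxdef
  set v : Fin K → EuclideanSpace ℝ (Fin m) :=
    fun k => Matrix.toEuclideanLin (S k + t • 1)⁻¹ (x - μ k) with hvdef
  have hγ1 : ∑ k, (w k * gaussDensity m (μ k) (S k + t • 1) x / fx) = 1 := by
    rw [← Finset.sum_div, ← hfxdef, div_self hfx_pos.ne']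
  have hRk : ∀ k, Matrix.toEuclideanLin (1 + t • (S k)⁻¹)⁻¹ x +
      Matrix.toEuclideanLin (1 + t⁻¹ • S k)⁻¹ (μ k) = x - t • v k := by
    intro k
    rw [inv_one_add_smul_inv' ht (hS k), inv_one_add_smul_inv ht (hS k)]
    have e1 : Matrix.toEuclideanLin (1 - t • (S k + t • 1)⁻¹) x
        = x - t • Matrix.toEuclideanLin (S k + t • 1)⁻¹ x := by
      rw [map_sub, _root_.map_smul]
      simp only [LinearMap.sub_apply, LinearMap.smul_apply]
      congr 1
      simp [Matrix.toEuclideanLin_apply]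
    have e2 : Matrix.toEuclideanLin (t • (S k + t • 1)⁻¹) (μ k)
        = t • Matrix.toEuclideanLin (S k + t • 1)⁻¹ (μ k) := by
      rw [_root_.map_smul]
      simp
    rw [e1, e2, hvdef]
    simp only []
    rw [map_sub, smul_sub]
    abel
  have hLHS : x + t • (fx⁻¹ • ∑ k, (-(w k * gaussDensity m (μ k) (S k + t • 1) x)) • v k)
      = x - ∑ k, ((w k * gaussDensity m (μ k) (S k + t • 1) x / fx) * t) • v k := by
    rw [smul_smul, Finset.smul_sum]
    have hterm : ∀ k ∈ Finset.univ,
        (t * fx⁻¹) • ((-(w k * gaussDensity m (μ k) (S k + t • 1) x)) • v k)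
        = -(((w k * gaussDensity m (μ k) (S k + t • 1) x / fx) * t) • v k) := by
      intro k _
      rw [smul_smul, ← neg_smul]
      congr 1
      ring
    rw [Finset.sum_congr rfl hterm, Finset.sum_neg_distrib, ← sub_eq_add_neg]
  have hR2 : ∑ k, (w k * gaussDensity m (μ k) (S k + t • 1) x / fx) •
      (Matrix.toEuclideanLin (1 + t • (S k)⁻¹)⁻¹ x +
        Matrix.toEuclideanLin (1 + t⁻¹ • S k)⁻¹ (μ k))
      = x - ∑ k, ((w k * gaussDensity m (μ k) (S k + t • 1) x / fx) * t) • v k := by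
    calc ∑ k, (w k * gaussDensity m (μ k) (S k + t • 1) x / fx) •
        (Matrix.toEuclideanLin (1 + t • (S k)⁻¹)⁻¹ x +
          Matrix.toEuclideanLin (1 + t⁻¹ • S k)⁻¹ (μ k))
        = ∑ k, ((w k * gaussDensity m (μ k) (S k + t • 1) x / fx) • x -
            ((w k * gaussDensity m (μ k) (S k + t • 1) x / fx) * t) • v k) :=
          Finset.sum_congr rfl fun k _ => by rw [hRk k, smul_sub, smul_smul]
      _ = (∑ k, (w k * gaussDensity m (μ k) (S k + t • 1) x / fx) • x)
          - ∑ k, ((w k * gaussDensity m (μ k) (S k + t • 1) x / fx) * t) • v k :=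
          Finset.sum_sub_distrib _ _
      _ = x - ∑ k, ((w k * gaussDensity m (μ k) (S k + t • 1) x / fx) * t) • v k := by
          rw [← Finset.sum_smul, hγ1, one_smul]
  rw [hLHS, hR2]

end
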